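/- Relaxed GOK principle: under the hypotheses of the GOK variational principle, the minimum of Tr(Γ H) over all density operators Γ whose spectrum is majorized by w equals Σ_j w_j E_j, the same value as the minimum over density operators with spectrum exactly w. -/

import Mathlib

open scoped ComplexOrder

/-- The vector `v` with entries sorted in decreasing order. -/
noncomputable def sortDesc {d : ℕ} (v : Fin d → ℝ) : Fin d → ℝ :=
  fun i => v (Tuple.sort (fun j => -v j) i)

/-- Sum of the `k` largest entries of `v`. -/
noncomputable def psum {d : ℕ} (v : Fin d → ℝ) (k : ℕ) : ℝ :=
  ∑ i ∈ Finset.univ.filter (fun i : Fin d => (i : ℕ) < k), sortDesc v i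

/-- `v ≺ w` : `v` is majorized by `w`. -/
def Majorizes {d : ℕ} (v w : Fin d → ℝ) : Prop :=
  (∀ k : ℕ, k ≤ d → psum v k ≤ psum w k) ∧ ∑ i, v i = ∑ i, w i


open Finset

/-- Abel summation positivity. -/
lemma abel_nonneg (D : ℕ) (a f : ℕ → ℝ)
    (ha : ∀ i, i + 1 < D → a (i + 1) ≤ a i)
    (hF : ∀ k, k ≤ D → 0 ≤ ∑ i ∈ range k, f i)
    (hD : ∑ i ∈ range D, f i = 0) :
    0 ≤ ∑ i ∈ range D, a i * f i := by
  have h := Finset.sum_range_by_parts a f D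
  simp only [smul_eq_mul] at h
  rw [h, hD, mul_zero, zero_sub]
  rw [← Finset.sum_neg_distrib]
  apply Finset.sum_nonneg
  intro i hi
  rw [Finset.mem_range] at hi
  have h1 : a (i+1) ≤ a i := ha i (by omega)
  have h2 : 0 ≤ ∑ j ∈ range (i+1), f j := hF (i+1) (by omega)
  nlinarith

noncomputable def extz {D : ℕ} (v : Fin D → ℝ) : ℕ → ℝ :=
  fun n => if h : n < D then v ⟨n, h⟩ else 0

lemma extz_lt {D : ℕ} (v : Fin D → ℝ) {n : ℕ} (h : n < D) : extz v n = v ⟨n, h⟩ := dif_pos h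

lemma sum_ext {D : ℕ} (v : Fin D → ℝ) : ∑ i : Fin D, v i = ∑ i ∈ range D, extz v i := by
  rw [← Fin.sum_univ_eq_sum_range (extz v) D]
  exact Finset.sum_congr rfl fun i _ => (extz_lt v i.isLt).symm

lemma sum_ite_lt_eq (g : ℕ → ℝ) {k D : ℕ} (hk : k ≤ D) :
    ∑ i ∈ range D, (if i < k then g i else 0) = ∑ i ∈ range k, g i := by
  rw [← Finset.sum_subset (Finset.range_subset_range.2 hk)
      (fun x _ hx => if_neg (fun h => hx (Finset.mem_range.2 h)))]
  exact Finset.sum_congr rfl fun i hi => if_pos (Finset.mem_range.1 hi)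

lemma sum_filter_ext {D k : ℕ} (hk : k ≤ D) (v : Fin D → ℝ) :
    ∑ i ∈ univ.filter (fun i : Fin D => (i : ℕ) < k), v i = ∑ i ∈ range k, extz v i := by
  rw [Finset.sum_filter]
  have h1 : ∑ i : Fin D, (if (i : ℕ) < k then v i else 0)
      = ∑ i ∈ range D, (if i < k then extz v i else 0) := by
    rw [← Fin.sum_univ_eq_sum_range (fun n => if n < k then extz v n else 0) D]
    refine Finset.sum_congr rfl fun i _ => ?_
    by_cases h : (i : ℕ) < k
    · rw [if_pos h, if_pos h, extz_lt v i.isLt]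
    · rw [if_neg h, if_neg h]
  rw [h1, sum_ite_lt_eq _ hk]

lemma sum_ite_one (k m : ℕ) :
    ∑ i ∈ range m, (if i < k then (1:ℝ) else 0) = (min m k : ℕ) := by
  induction m with
  | zero => simp
  | succ n ih =>
    rw [Finset.sum_range_succ, ih]
    rcases lt_or_ge n k with h | h
    · have h1 : min (n+1) k = n+1 := by omega
      have h2 : min n k = n := by omega
      rw [if_pos h, h1, h2]; push_cast; ring
    · have h1 : min (n+1) k = k := by omega
      have h2 : min n k = k := by omega
      rw [if_neg (by omega), h1, h2, add_zero]

/-- key dominance lemma. -/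
lemma dominance {D k : ℕ} (hk : k ≤ D) (E q : Fin D → ℝ) (hE : Monotone E)
    (h0 : ∀ j, 0 ≤ q j) (h1 : ∀ j, q j ≤ 1) (hs : ∑ j, q j = k) :
    ∑ j ∈ univ.filter (fun j : Fin D => (j : ℕ) < k), E j ≤ ∑ j, E j * q j := by
  have key : 0 ≤ ∑ i ∈ range D,
      (fun n => -(extz E n)) i * (fun n => (if n < k then 1 else 0) - extz q n) i := by
    apply abel_nonneg
    · intro i hi
      simp only [neg_le_neg_iff]
      rw [extz_lt E (show i < D by omega), extz_lt E (show i + 1 < D by omega)]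
      exact hE (by simp [Fin.le_def])
    · intro m hm
      rw [Finset.sum_sub_distrib, sum_ite_one k m, sub_nonneg]
      have hq1 : ∑ i ∈ range m, extz q i ≤ (m : ℝ) := by
        calc ∑ i ∈ range m, extz q i ≤ ∑ i ∈ range m, (1:ℝ) := by
              refine Finset.sum_le_sum fun i hi => ?_
              rw [extz_lt q (show i < D by have := Finset.mem_range.1 hi; omega)]
              exact h1 _
          _ = m := by simp
      have hq2 : ∑ i ∈ range m, extz q i ≤ (k : ℝ) := by
        rw [← hs, sum_ext]
        refine Finset.sum_le_sum_of_subset_of_nonneg (Finset.range_subset_range.2 hm)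
          fun i hi _ => ?_
        rw [extz_lt q (Finset.mem_range.1 hi)]
        exact h0 _
      rw [Nat.cast_min]
      exact le_min hq1 hq2
    · rw [Finset.sum_sub_distrib, sum_ite_one k D, ← sum_ext, hs]
      have : min D k = k := by omega
      rw [this, sub_self]
  have expand : ∑ i ∈ range D,
      (fun n => -(extz E n)) i * (fun n => (if n < k then 1 else 0) - extz q n) i
      = (∑ j, E j * q j) - ∑ j ∈ univ.filter (fun j : Fin D => (j : ℕ) < k), E j := by
    rw [sum_filter_ext hk]
    have hterm : ∀ i ∈ range D, -(extz E i) * ((if i < k then (1:ℝ) else 0) - extz q i)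
        = extz E i * extz q i - (if i < k then extz E i else 0) := by
      intro i _
      by_cases h : i < k
      · rw [if_pos h, if_pos h]; ring
      · rw [if_neg h, if_neg h]; ring
    rw [Finset.sum_congr rfl hterm, Finset.sum_sub_distrib, sum_ite_lt_eq _ hk]
    congr 1
    rw [sum_ext (fun j => E j * q j)]
    refine Finset.sum_congr rfl fun i hi => ?_
    have hiD := Finset.mem_range.1 hi
    rw [extz_lt (fun j => E j * q j) hiD, extz_lt E hiD, extz_lt q hiD]
  linarith [expand ▸ key]

lemma antitone_sortDesc {D : ℕ} (v : Fin D → ℝ) : Antitone (sortDesc v) := by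
  intro i j hij
  have := Tuple.monotone_sort (fun j => -v j) hij
  simp only [Function.comp_apply] at this
  simpa [sortDesc] using this

lemma sortDesc_of_antitone {D : ℕ} {w : Fin D → ℝ} (hw : Antitone w) : sortDesc w = w := by
  have hmono : Monotone (fun j => -w j) := fun a b hab => neg_le_neg (hw hab)
  have h := Tuple.sort_eq_refl_iff_monotone.2 hmono
  funext i
  rw [sortDesc, h]
  rfl

lemma sortDesc_comp_perm {D : ℕ} (v : Fin D → ℝ) (τ : Equiv.Perm (Fin D)) :
    sortDesc (v ∘ τ) = sortDesc v := by
  have h : (fun j => -v j) ∘ ⇑((Tuple.sort fun j => -v (τ j)).trans τ)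
      = (fun j => -v j) ∘ ⇑(Tuple.sort fun j => -v j) :=
    Tuple.unique_monotone (Tuple.monotone_sort (fun j => -v (τ j)))
      (Tuple.monotone_sort (fun j => -v j))
  funext i
  have h2 := congrFun h i
  simp only [Function.comp_apply, Equiv.trans_apply, neg_inj] at h2
  simpa [sortDesc] using h2

lemma sum_sortDesc {D : ℕ} (v : Fin D → ℝ) : ∑ i, sortDesc v i = ∑ i, v i :=
  Equiv.sum_comp (Tuple.sort (fun j => -v j)) v

lemma psum_succ {D : ℕ} (v : Fin D → ℝ) {k : ℕ} (hk : k < D) :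
    psum v (k + 1) = psum v k + sortDesc v ⟨k, hk⟩ := by
  rw [psum, psum, sum_filter_ext (by omega) (sortDesc v), sum_filter_ext (le_of_lt hk) (sortDesc v),
    Finset.sum_range_succ, extz_lt (sortDesc v) hk]

lemma sortDesc_eq_of_psum_eq {D : ℕ} {v c : Fin D → ℝ}
    (h : ∀ k, k ≤ D → psum v k = psum c k) : sortDesc v = sortDesc c := by
  funext i
  have h1 := psum_succ v i.isLt
  have h2 := psum_succ c i.isLt
  have e1 := h i (le_of_lt i.isLt)
  have e2 := h (i + 1) i.isLt
  rw [Fin.eta] at h1 h2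
  linarith

/-- Abel positivity over `Fin D`. -/
lemma abel_fin {D : ℕ} (a f : Fin D → ℝ) (ha : Antitone a)
    (hF : ∀ k, k ≤ D → 0 ≤ ∑ i ∈ univ.filter (fun i : Fin D => (i : ℕ) < k), f i)
    (hD : ∑ i, f i = 0) : 0 ≤ ∑ i, a i * f i := by
  rw [sum_ext (fun i => a i * f i)]
  have h := abel_nonneg D (extz a) (extz f) ?_ ?_ ?_
  · refine le_trans h (le_of_eq (Finset.sum_congr rfl fun i hi => ?_))
    have hiD := Finset.mem_range.1 hi
    rw [extz_lt (fun i => a i * f i) hiD, extz_lt a hiD, extz_lt f hiD]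
  · intro i hi
    rw [extz_lt a (show i < D by omega), extz_lt a (show i + 1 < D by omega)]
    exact ha (by simp [Fin.le_def])
  · intro k hk
    rw [← sum_filter_ext hk f]
    exact hF k hk
  · rw [← sum_ext f]
    exact hD

/-- Majorization from a doubly stochastic mixing. -/
lemma psum_le_of_ds {D : ℕ} (v c : Fin D → ℝ) (Q : Fin D → Fin D → ℝ)
    (hpos : ∀ i j, 0 ≤ Q i j) (hrow : ∀ i, ∑ j, Q i j = 1) (hcol : ∀ j, ∑ i, Q i j = 1)
    (hv : ∀ i, v i = ∑ j, Q i j * c j) {k : ℕ} (hk : k ≤ D) : psum v k ≤ psum c k := by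
  classical
  set π := Tuple.sort (fun j => -v j) with hπ
  set ρ := Tuple.sort (fun j => -c j) with hρ
  set g := sortDesc c with hg
  set q : Fin D → ℝ := fun j => ∑ i ∈ univ.filter (fun i : Fin D => (i : ℕ) < k), Q (π i) (ρ j)
    with hq
  have hcard : ∑ i ∈ univ.filter (fun i : Fin D => (i : ℕ) < k), (1:ℝ) = k := by
    rw [sum_filter_ext hk (fun _ => (1:ℝ))]
    rw [Finset.sum_congr rfl (fun i hi => extz_lt (fun _ => (1:ℝ))
      (show i < D by have := Finset.mem_range.1 hi; omega))]
    simp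
  have hpsv : psum v k = ∑ j, g j * q j := by
    calc psum v k = ∑ i ∈ univ.filter (fun i : Fin D => (i : ℕ) < k), ∑ j, Q (π i) j * c j := by
          rw [psum]
          exact Finset.sum_congr rfl fun i _ => hv (π i)
      _ = ∑ i ∈ univ.filter (fun i : Fin D => (i : ℕ) < k), ∑ j, Q (π i) (ρ j) * c (ρ j) :=
          Finset.sum_congr rfl fun i _ => (Equiv.sum_comp ρ (fun j => Q (π i) j * c j)).symm
      _ = ∑ j, ∑ i ∈ univ.filter (fun i : Fin D => (i : ℕ) < k), Q (π i) (ρ j) * c (ρ j) :=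
          Finset.sum_comm
      _ = ∑ j, g j * q j := by
          refine Finset.sum_congr rfl fun j _ => ?_
          rw [← Finset.sum_mul, mul_comm]
          rfl
  have hq0 : ∀ j, 0 ≤ q j := fun j => Finset.sum_nonneg fun i _ => hpos _ _
  have hq1 : ∀ j, q j ≤ 1 := by
    intro j
    calc q j ≤ ∑ i : Fin D, Q (π i) (ρ j) :=
          Finset.sum_le_sum_of_subset_of_nonneg (Finset.filter_subset _ _)
            (fun i _ _ => hpos _ _)
      _ = ∑ i : Fin D, Q i (ρ j) := Equiv.sum_comp π (fun i => Q i (ρ j))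
      _ = 1 := hcol _
  have hqs : ∑ j, q j = k := by
    rw [hq]
    rw [Finset.sum_comm]
    calc ∑ i ∈ univ.filter (fun i : Fin D => (i : ℕ) < k), ∑ j, Q (π i) (ρ j)
        = ∑ i ∈ univ.filter (fun i : Fin D => (i : ℕ) < k), (1:ℝ) := by
          refine Finset.sum_congr rfl fun i _ => ?_
          rw [Equiv.sum_comp ρ (fun j => Q (π i) j)]
          exact hrow _
      _ = k := hcard
  have hdom := dominance hk (fun j => -(g j)) q
    (fun a b hab => neg_le_neg (antitone_sortDesc c hab)) hq0 hq1 hqs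
  simp only [neg_mul, Finset.sum_neg_distrib] at hdom
  have : psum c k = ∑ j ∈ univ.filter (fun j : Fin D => (j : ℕ) < k), g j := rfl
  rw [this, hpsv]
  have hcomm : ∑ j : Fin D, g j * q j = ∑ j : Fin D, -(g j) * q j * (-1) := by
    refine Finset.sum_congr rfl fun j _ => by ring
  linarith [hdom]

/-- The key real inequality: if `Q` is doubly stochastic, `E` monotone, `γ ≺ w` with `w`
antitone, then `∑ w E ≤ ∑_i γ i ∑_j E j Q i j`. -/
lemma lower_bound_real {D : ℕ} (γ w E : Fin D → ℝ) (Q : Fin D → Fin D → ℝ)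
    (hE : Monotone E) (hw : Antitone w)
    (hpos : ∀ i j, 0 ≤ Q i j) (hrow : ∀ i, ∑ j, Q i j = 1) (hcol : ∀ j, ∑ i, Q i j = 1)
    (hmaj : Majorizes γ w) :
    ∑ j, w j * E j ≤ ∑ i, γ i * (∑ j, E j * Q i j) := by
  classical
  set π := Tuple.sort (fun j => -γ j) with hπ
  set g := sortDesc γ with hg
  set d : Fin D → ℝ := fun i => ∑ j, E j * Q i j with hd
  -- total of d
  have hdtot : ∑ i, d i = ∑ j, E j := by
    rw [hd, Finset.sum_comm]
    refine Finset.sum_congr rfl fun j _ => ?_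
    rw [← Finset.mul_sum, hcol j, mul_one]
  -- reindex
  have hx : ∑ i, γ i * d i = ∑ i, g i * d (π i) :=
    (Equiv.sum_comp π (fun i => γ i * d i)).symm
  -- Step A : ∑ g i * d (π i) ≥ ∑ g i * E i
  have stepA : ∑ i, g i * E i ≤ ∑ i, g i * d (π i) := by
    have h := abel_fin g (fun i => d (π i) - E i) (antitone_sortDesc γ) ?_ ?_
    · have : ∑ i : Fin D, g i * (d (π i) - E i)
          = ∑ i : Fin D, g i * d (π i) - ∑ i : Fin D, g i * E i := by
        rw [← Finset.sum_sub_distrib]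
        exact Finset.sum_congr rfl fun i _ => by ring
      linarith [this ▸ h]
    · intro k hk
      rw [Finset.sum_sub_distrib, sub_nonneg]
      -- ∑_{i<k} E i ≤ ∑_{i<k} d (π i)
      set q : Fin D → ℝ := fun j => ∑ i ∈ univ.filter (fun i : Fin D => (i : ℕ) < k), Q (π i) j
        with hqdef
      have hcard : ∑ i ∈ univ.filter (fun i : Fin D => (i : ℕ) < k), (1:ℝ) = k := by
        rw [sum_filter_ext hk (fun _ => (1:ℝ))]
        rw [Finset.sum_congr rfl (fun i hi => extz_lt (fun _ => (1:ℝ))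
          (show i < D by have := Finset.mem_range.1 hi; omega))]
        simp
      have hsum : ∑ i ∈ univ.filter (fun i : Fin D => (i : ℕ) < k), d (π i)
          = ∑ j, E j * q j := by
        calc ∑ i ∈ univ.filter (fun i : Fin D => (i : ℕ) < k), d (π i)
            = ∑ i ∈ univ.filter (fun i : Fin D => (i : ℕ) < k), ∑ j, E j * Q (π i) j := rfl
          _ = ∑ j, ∑ i ∈ univ.filter (fun i : Fin D => (i : ℕ) < k), E j * Q (π i) j :=
              Finset.sum_comm
          _ = ∑ j, E j * q j := by
              refine Finset.sum_congr rfl fun j _ => ?_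
              rw [← Finset.mul_sum]
      rw [hsum]
      refine dominance hk E q hE (fun j => Finset.sum_nonneg fun i _ => hpos _ _) ?_ ?_
      · intro j
        calc q j ≤ ∑ i : Fin D, Q (π i) j :=
              Finset.sum_le_sum_of_subset_of_nonneg (Finset.filter_subset _ _)
                (fun i _ _ => hpos _ _)
          _ = ∑ i : Fin D, Q i j := Equiv.sum_comp π (fun i => Q i j)
          _ = 1 := hcol _
      · rw [hqdef, Finset.sum_comm]
        calc ∑ i ∈ univ.filter (fun i : Fin D => (i : ℕ) < k), ∑ j, Q (π i) j
            = ∑ i ∈ univ.filter (fun i : Fin D => (i : ℕ) < k), (1:ℝ) :=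
              Finset.sum_congr rfl fun i _ => hrow _
          _ = k := hcard
    · have h1 : ∑ i : Fin D, d (π i) = ∑ i, d i := Equiv.sum_comp π d
      rw [Finset.sum_sub_distrib, h1, hdtot, sub_self]
  -- Step B : ∑ g i * E i ≥ ∑ w i * E i
  have stepB : ∑ i, w i * E i ≤ ∑ i, g i * E i := by
    have h := abel_fin (fun i => -(E i)) (fun i => w i - g i)
      (fun a b hab => neg_le_neg (hE hab)) ?_ ?_
    · have : ∑ i : Fin D, -(E i) * (w i - g i)
          = ∑ i : Fin D, g i * E i - ∑ i : Fin D, w i * E i := by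
        rw [← Finset.sum_sub_distrib]
        exact Finset.sum_congr rfl fun i _ => by ring
      linarith [this ▸ h]
    · intro k hk
      rw [Finset.sum_sub_distrib, sub_nonneg]
      have h1 : ∑ i ∈ univ.filter (fun i : Fin D => (i : ℕ) < k), g i = psum γ k := rfl
      have h2 : ∑ i ∈ univ.filter (fun i : Fin D => (i : ℕ) < k), w i = psum w k := by
        rw [psum, sortDesc_of_antitone hw]
      rw [h1, h2]
      exact hmaj.1 k hk
    · rw [Finset.sum_sub_distrib, hg, sum_sortDesc, hmaj.2, sub_self]
  rw [hx]
  exact le_trans stepB stepA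

open Matrix in
lemma conj_diag_apply {D : ℕ} (M : Matrix (Fin D) (Fin D) ℂ) (c : Fin D → ℝ) (i : Fin D) :
    (M * Matrix.diagonal (Complex.ofReal ∘ c) * star M) i i
      = Complex.ofReal (∑ j, c j * Complex.normSq (M i j)) := by
  rw [Matrix.star_eq_conjTranspose, Matrix.mul_apply, Complex.ofReal_sum]
  refine Finset.sum_congr rfl fun j _ => ?_
  rw [Matrix.mul_diagonal, Matrix.conjTranspose_apply, Complex.ofReal_mul]
  calc M i j * (Complex.ofReal ∘ c) j * star (M i j)
      = (c j : ℂ) * (M i j * (starRingEnd ℂ) (M i j)) := by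
        simp only [Function.comp_apply, Complex.star_def]; ring
    _ = (c j : ℂ) * ((Complex.normSq (M i j) : ℝ) : ℂ) := by rw [Complex.mul_conj]

open Matrix in
lemma row_nsq {D : ℕ} (M : Matrix (Fin D) (Fin D) ℂ) (h : M * star M = 1) (i : Fin D) :
    ∑ j, Complex.normSq (M i j) = 1 := by
  rw [Matrix.star_eq_conjTranspose] at h
  have h1 : (M * Mᴴ) i i = 1 := by rw [h, Matrix.one_apply_eq]
  rw [Matrix.mul_apply] at h1
  have h2 : ∑ j, M i j * Mᴴ j i = ((∑ j, Complex.normSq (M i j) : ℝ) : ℂ) := by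
    rw [Complex.ofReal_sum]
    refine Finset.sum_congr rfl fun j _ => ?_
    rw [Matrix.conjTranspose_apply, Complex.star_def, Complex.mul_conj]
  rw [h2] at h1
  exact_mod_cast h1

open Matrix in
lemma col_nsq {D : ℕ} (M : Matrix (Fin D) (Fin D) ℂ) (h : star M * M = 1) (j : Fin D) :
    ∑ i, Complex.normSq (M i j) = 1 := by
  rw [Matrix.star_eq_conjTranspose] at h
  have h1 : (Mᴴ * M) j j = 1 := by rw [h, Matrix.one_apply_eq]
  rw [Matrix.mul_apply] at h1
  have h2 : ∑ i, Mᴴ j i * M i j = ((∑ i, Complex.normSq (M i j) : ℝ) : ℂ) := by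
    rw [Complex.ofReal_sum]
    refine Finset.sum_congr rfl fun i _ => ?_
    rw [Matrix.conjTranspose_apply, Complex.star_def, mul_comm, Complex.mul_conj]
  rw [h2] at h1
  exact_mod_cast h1

open Matrix in
lemma trace_pair {D : ℕ} (V U : Matrix (Fin D) (Fin D) ℂ) (γ μ : Fin D → ℝ) :
    ((V * Matrix.diagonal (Complex.ofReal ∘ γ) * star V)
      * (U * Matrix.diagonal (Complex.ofReal ∘ μ) * star U)).trace
      = Complex.ofReal (∑ i, γ i * ∑ j, μ j * Complex.normSq ((star V * U) i j)) := by
  set Dγ := Matrix.diagonal (Complex.ofReal ∘ γ) with hDγ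
  set Dμ := Matrix.diagonal (Complex.ofReal ∘ μ) with hDμ
  have hMH : star (star V * U) = star U * V := by
    simp [Matrix.star_mul]
  have e1 : (V * Dγ * star V) * (U * Dμ * star U)
      = V * (Dγ * star V * U * Dμ * star U) := by
    simp only [mul_assoc]
  have e2 : (Dγ * star V * U * Dμ * star U) * V
      = Dγ * ((star V * U) * Dμ * star (star V * U)) := by
    rw [hMH]
    simp only [mul_assoc]
  rw [e1, Matrix.trace_mul_comm, e2]
  set Z := (star V * U) * Dμ * star (star V * U) with hZ
  have e3' : (Dγ * Z).trace = ∑ i, (Dγ * Z) i i := rfl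
  have e3 : (Dγ * Z).trace = ∑ i, (Complex.ofReal ∘ γ) i * Z i i := by
    rw [e3']
    exact Finset.sum_congr rfl fun i _ => Matrix.diagonal_mul _ _ i i
  rw [e3, Complex.ofReal_sum]
  refine Finset.sum_congr rfl fun i _ => ?_
  rw [hZ, conj_diag_apply (star V * U) μ i, Complex.ofReal_mul]
  rfl


/-- Relaxed GOK variational principle: the minimum of `Tr(Γ H)` over density
operators whose spectrum is majorized by `w` equals `∑ j, w j * E j`, the same
value as the minimum over density operators with spectrum exactly `w`. -/
theorem relaxed_gok {D : ℕ} (H : Matrix (Fin D) (Fin D) ℂ)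
    (hH : H.IsHermitian)
    (E : Fin D → ℝ) (hEmono : Monotone E)
    (hEeig : ∃ σ : Equiv.Perm (Fin D), E = hH.eigenvalues ∘ σ)
    (w : Fin D → ℝ) (hwmono : Antitone w) (hwpos : ∀ j, 0 ≤ w j)
    (hwsum : ∑ j, w j = 1) :
    IsLeast {x : ℝ | ∃ Γ : Matrix (Fin D) (Fin D) ℂ, ∃ hΓ : Γ.PosSemidef,
        Γ.trace = 1 ∧ Majorizes hΓ.1.eigenvalues w ∧ (Γ * H).trace = (x : ℂ)}
      (∑ j, w j * E j) ∧
    IsLeast {x : ℝ | ∃ Γ : Matrix (Fin D) (Fin D) ℂ, ∃ hΓ : Γ.PosSemidef,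
        Γ.trace = 1 ∧ sortDesc hΓ.1.eigenvalues = w ∧ (Γ * H).trace = (x : ℂ)}
      (∑ j, w j * E j) := by
  classical
  obtain ⟨σ, hEσ⟩ := hEeig
  set μ : Fin D → ℝ := hH.eigenvalues with hμdef
  set U : Matrix (Fin D) (Fin D) ℂ := ↑(hH.eigenvectorUnitary) with hUdef
  have hU1 : U * star U = 1 := Matrix.mem_unitaryGroup_iff.mp hH.eigenvectorUnitary.2
  have hU2 : star U * U = 1 := Matrix.mem_unitaryGroup_iff'.mp hH.eigenvectorUnitary.2
  -- lower bound for set 1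
  have hlow : ∀ x : ℝ, (∃ Γ : Matrix (Fin D) (Fin D) ℂ, ∃ hΓ : Γ.PosSemidef,
      Γ.trace = 1 ∧ Majorizes hΓ.1.eigenvalues w ∧ (Γ * H).trace = (x : ℂ)) →
      ∑ j, w j * E j ≤ x := by
    rintro x ⟨Γ, hΓ, _, hmaj, hxeq⟩
    set γ := hΓ.1.eigenvalues with hγdef
    set V : Matrix (Fin D) (Fin D) ℂ := ↑(hΓ.1.eigenvectorUnitary) with hVdef
    have hV1 : V * star V = 1 := Matrix.mem_unitaryGroup_iff.mp hΓ.1.eigenvectorUnitary.2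
    have hV2 : star V * V = 1 := Matrix.mem_unitaryGroup_iff'.mp hΓ.1.eigenvectorUnitary.2
    set M := star V * U with hMdef
    have hMH : star M = star U * V := by
      simp [hMdef, star_mul]
    have hMM : M * star M = 1 := by
      rw [hMH, hMdef]
      calc star V * U * (star U * V) = star V * (U * star U * V) := by simp only [mul_assoc]
        _ = star V * V := by rw [hU1, one_mul]
        _ = 1 := hV2
    have hMM2 : star M * M = 1 := by
      rw [hMH, hMdef]
      calc star U * V * (star V * U) = star U * (V * star V * U) := by simp only [mul_assoc]
        _ = star U * U := by rw [hV1, one_mul]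
        _ = 1 := hU2
    have htrace : (Γ * H).trace
        = Complex.ofReal (∑ i, γ i * ∑ j, μ j * Complex.normSq (M i j)) := by
      conv_lhs => rw [hΓ.1.spectral_theorem, hH.spectral_theorem]
      exact trace_pair V U γ μ
    have hxr : x = ∑ i, γ i * ∑ j, μ j * Complex.normSq (M i j) := by
      have h := hxeq.symm.trans htrace
      exact_mod_cast h
    set Q : Fin D → Fin D → ℝ := fun i j => Complex.normSq (M i (σ j)) with hQdef
    have hxr2 : x = ∑ i, γ i * ∑ j, E j * Q i j := by
      rw [hxr]
      refine Finset.sum_congr rfl fun i _ => ?_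
      congr 1
      rw [← Equiv.sum_comp σ (fun j => μ j * Complex.normSq (M i j))]
      refine Finset.sum_congr rfl fun j _ => ?_
      rw [hEσ]
      rfl
    rw [hxr2]
    refine lower_bound_real γ w E Q hEmono hwmono
      (fun i j => Complex.normSq_nonneg _) ?_ ?_ hmaj
    · intro i
      have h := Equiv.sum_comp σ (fun j => Complex.normSq (M i j))
      rw [hQdef]
      rw [h]
      exact row_nsq M hMM i
    · intro j
      exact col_nsq M hMM2 (σ j)
  -- sortDesc = w implies majorization
  have hmaj_of_sort : ∀ γ : Fin D → ℝ, sortDesc γ = w → Majorizes γ w := by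
    intro γ hsort
    refine ⟨fun k _ => le_of_eq ?_, ?_⟩
    · rw [psum, psum, hsort, sortDesc_of_antitone hwmono]
    · rw [← sum_sortDesc γ, hsort]
  -- construction of the optimizer
  set c : Fin D → ℝ := fun i => w (σ.symm i) with hcdef
  have hsumc : ∑ i, c i = ∑ j, w j := Equiv.sum_comp σ.symm w
  set Γ₀ := U * Matrix.diagonal (Complex.ofReal ∘ c) * star U with hΓ₀def
  have hdiagpsd : (Matrix.diagonal (Complex.ofReal ∘ c)).PosSemidef :=
    Matrix.posSemidef_diagonal_iff.2 fun i => by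
      simpa using Complex.zero_le_real.2 (hwpos (σ.symm i))
  have hpsd : Γ₀.PosSemidef := by
    have h := hdiagpsd.mul_mul_conjTranspose_same U
    rw [hΓ₀def, Matrix.star_eq_conjTranspose]
    exact h
  have htrΓ₀ : Γ₀.trace = 1 := by
    rw [hΓ₀def, Matrix.trace_mul_cycle, hU2, one_mul, Matrix.trace_diagonal]
    have h : ∑ i, (Complex.ofReal ∘ c) i = ((∑ i, c i : ℝ) : ℂ) := (Complex.ofReal_sum _ _).symm
    rw [h, hsumc, hwsum]
    norm_num
  -- eigenvalues of Γ₀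
  set μ' := hpsd.1.eigenvalues with hμ'def
  set V' : Matrix (Fin D) (Fin D) ℂ := ↑(hpsd.1.eigenvectorUnitary) with hV'def
  have hV'1 : V' * star V' = 1 := Matrix.mem_unitaryGroup_iff.mp hpsd.1.eigenvectorUnitary.2
  have hV'2 : star V' * V' = 1 := Matrix.mem_unitaryGroup_iff'.mp hpsd.1.eigenvectorUnitary.2
  set N := star V' * U with hNdef
  have hNH : star N = star U * V' := by
    simp [hNdef, star_mul]
  have hNN : N * star N = 1 := by
    rw [hNH, hNdef]
    calc star V' * U * (star U * V') = star V' * (U * star U * V') := by simp only [mul_assoc]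
      _ = star V' * V' := by rw [hU1, one_mul]
      _ = 1 := hV'2
  have hNN2 : star N * N = 1 := by
    rw [hNH, hNdef]
    calc star U * V' * (star V' * U) = star U * (V' * star V' * U) := by simp only [mul_assoc]
      _ = star U * U := by rw [hV'1, one_mul]
      _ = 1 := hU2
  have hdiag : Matrix.diagonal (Complex.ofReal ∘ μ')
      = N * Matrix.diagonal (Complex.ofReal ∘ c) * star N := by
    have h0 := hpsd.1.conjStarAlgAut_star_eigenvectorUnitary
    rw [Unitary.conjStarAlgAut_star_apply] at h0
    rw [← hμ'def] at h0
    rw [show (Matrix.diagonal (Complex.ofReal ∘ μ') : Matrix (Fin D) (Fin D) ℂ)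
        = Matrix.diagonal (RCLike.ofReal ∘ μ') from rfl, ← h0, ← hV'def]
    show star V' * (U * Matrix.diagonal (Complex.ofReal ∘ c) * star U) * V'
        = N * Matrix.diagonal (Complex.ofReal ∘ c) * star N
    rw [hNH, hNdef]
    simp only [mul_assoc]
  have hμ'eq : ∀ i, μ' i = ∑ j, c j * Complex.normSq (N i j) := by
    intro i
    have h1 := congrFun (congrFun hdiag i) i
    rw [Matrix.diagonal_apply_eq, conj_diag_apply N c i] at h1
    simp only [Function.comp_apply] at h1
    exact_mod_cast h1
  have hdiag2 : Matrix.diagonal (Complex.ofReal ∘ c)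
      = star N * Matrix.diagonal (Complex.ofReal ∘ μ') * N := by
    rw [hdiag]
    have h : star N * (N * Matrix.diagonal (Complex.ofReal ∘ c) * star N) * N
        = (star N * N) * Matrix.diagonal (Complex.ofReal ∘ c) * (star N * N) := by
      simp only [mul_assoc]
    rw [h, hNN2, one_mul, mul_one]
  have hceq : ∀ j, c j = ∑ i, μ' i * Complex.normSq (N i j) := by
    intro j
    have h1 := congrFun (congrFun hdiag2 j) j
    rw [Matrix.diagonal_apply_eq] at h1
    have h2 : (star N * Matrix.diagonal (Complex.ofReal ∘ μ') * N) j j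
        = Complex.ofReal (∑ i, μ' i * Complex.normSq (star N j i)) := by
      have h := conj_diag_apply (star N) μ' j
      rwa [star_star] at h
    rw [h2] at h1
    have h3 : ∑ i, μ' i * Complex.normSq (star N j i) = ∑ i, μ' i * Complex.normSq (N i j) :=
      Finset.sum_congr rfl fun i _ => by
        rw [Matrix.star_apply, Complex.star_def, Complex.normSq_conj]
    rw [h3] at h1
    simp only [Function.comp_apply] at h1
    exact_mod_cast h1
  set Qn : Fin D → Fin D → ℝ := fun i j => Complex.normSq (N i j) with hQndef
  have hQnpos : ∀ i j, 0 ≤ Qn i j := fun i j => Complex.normSq_nonneg _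
  have hQnrow : ∀ i, ∑ j, Qn i j = 1 := row_nsq N hNN
  have hQncol : ∀ j, ∑ i, Qn i j = 1 := col_nsq N hNN2
  have hpsume : ∀ k, k ≤ D → psum μ' k = psum c k := by
    intro k hk
    refine le_antisymm ?_ ?_
    · refine psum_le_of_ds μ' c Qn hQnpos hQnrow hQncol (fun i => ?_) hk
      rw [hμ'eq i]
      exact Finset.sum_congr rfl fun j _ => mul_comm _ _
    · refine psum_le_of_ds c μ' (fun i j => Qn j i) (fun i j => hQnpos j i)
        (fun j => hQncol j) (fun i => hQnrow i) (fun j => ?_) hk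
      rw [hceq j]
      exact Finset.sum_congr rfl fun i _ => mul_comm _ _
  have hsort' : sortDesc μ' = w := by
    have h1 : sortDesc μ' = sortDesc c := sortDesc_eq_of_psum_eq hpsume
    have h2 : c = w ∘ ⇑σ.symm := rfl
    rw [h1, h2, sortDesc_comp_perm w σ.symm, sortDesc_of_antitone hwmono]
  -- value of the optimizer
  have htrval : (Γ₀ * H).trace = Complex.ofReal (∑ j, w j * E j) := by
    have h0 : (Γ₀ * H).trace
        = Complex.ofReal (∑ i, c i * ∑ j, μ j * Complex.normSq ((star U * U) i j)) := by
      conv_lhs => rw [hΓ₀def, hH.spectral_theorem]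
      exact trace_pair U U c μ
    rw [h0]
    congr 1
    have h1 : ∀ i, ∑ j, μ j * Complex.normSq ((star U * U) i j) = μ i := by
      intro i
      rw [hU2]
      rw [Finset.sum_eq_single i (fun j _ hji => by
        rw [Matrix.one_apply_ne' hji]
        simp) (fun h => absurd (Finset.mem_univ i) h)]
      rw [Matrix.one_apply_eq]
      simp
    rw [Finset.sum_congr rfl fun i _ => by rw [h1 i]]
    rw [← Equiv.sum_comp σ (fun i => c i * μ i)]
    refine Finset.sum_congr rfl fun j _ => ?_
    rw [hEσ, hcdef]
    simp
  -- conclusion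
  constructor
  · constructor
    · exact ⟨Γ₀, hpsd, htrΓ₀, hmaj_of_sort μ' hsort', by rw [htrval]⟩
    · intro x hx
      exact hlow x hx
  · constructor
    · exact ⟨Γ₀, hpsd, htrΓ₀, hsort', by rw [htrval]⟩
    · rintro x ⟨Γ, hΓ, h1, h2, h3⟩
      exact hlow x ⟨Γ, hΓ, h1, hmaj_of_sort _ h2, h3⟩
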